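/- arXiv:2110.06300 — 5 statements merged into one kernel-verified Lean document; each statement's English description precedes it below -/
import Mathlib

section
/- In the category of Banach spaces with contractive linear maps, every Banach space X is the colimit (inductive limit) of the diagram of its finite-dimensional subspaces with inclusion maps. -/
open CategoryTheory Limits

/-- The category of (real) Banach spaces and linear operators of norm at most one. -/
structure Ban1 : Type 1 where
  carrier : Type
  [nacg : NormedAddCommGroup carrier]
  [nsp : NormedSpace ℝ carrier]
  [cpl : CompleteSpace carrier]

attribute [instance] Ban1.nacg Ban1.nsp Ban1.cpl

instance : CoeSort Ban1 Type := ⟨Ban1.carrier⟩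

instance : Category Ban1 where
  Hom X Y := {f : X.carrier →L[ℝ] Y.carrier // ‖f‖ ≤ 1}
  id X := ⟨ContinuousLinearMap.id ℝ X.carrier, ContinuousLinearMap.norm_id_le⟩
  comp f g := ⟨g.1.comp f.1,
    le_trans (ContinuousLinearMap.opNorm_comp_le _ _)
      (mul_le_one₀ g.2 (norm_nonneg _) f.2)⟩
  id_comp f := Subtype.ext (by ext x; rfl)
  comp_id f := Subtype.ext (by ext x; rfl)
  assoc f g h := Subtype.ext (by ext x; rfl)

/-- The directed poset of finite-dimensional subspaces of a Banach space. -/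
def FinSub (X : Ban1) : Type := {s : Submodule ℝ X.carrier // FiniteDimensional ℝ s}

instance (X : Ban1) : PartialOrder (FinSub X) := Subtype.partialOrder _
instance (X : Ban1) : Category (FinSub X) := Preorder.smallCategory _

/-- A finite-dimensional subspace, as a Banach space. -/
noncomputable def FinSub.toBan {X : Ban1} (s : FinSub X) : Ban1 :=
  letI := s.2
  { carrier := s.1 }

/-- The diagram of finite-dimensional subspaces of `X` with inclusion maps. -/
noncomputable def finSubDiagram (X : Ban1) : FinSub X ⥤ Ban1 where
  obj s := s.toBan
  map {s t} h :=
    ⟨LinearMap.mkContinuous (Submodule.inclusion (leOfHom h)) 1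
      (fun x => by rw [one_mul]; rfl), LinearMap.mkContinuous_norm_le _ zero_le_one _⟩
  map_id s := Subtype.ext (by ext x; rfl)
  map_comp f g := Subtype.ext (by ext x; rfl)

/-- The cocone over the diagram of finite-dimensional subspaces given by the inclusions into `X`. -/
noncomputable def finSubCocone (X : Ban1) : Cocone (finSubDiagram X) where
  pt := X
  ι :=
    { app := fun s =>
        ⟨LinearMap.mkContinuous s.1.subtype 1 (fun x => by rw [one_mul]; rfl),
          LinearMap.mkContinuous_norm_le _ zero_le_one _⟩
      naturality := fun s t h => Subtype.ext (by ext x; rfl) }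

/-- The span of a single vector, as a finite-dimensional subspace. -/
noncomputable def FinSub.single (X : Ban1) (x : X.carrier) : FinSub X :=
  ⟨Submodule.span ℝ {x}, inferInstance⟩

noncomputable def descKey {X : Ban1} (c : Cocone (finSubDiagram X)) (x : X.carrier) :
    c.pt.carrier :=
  (c.ι.app (FinSub.single X x)).1 ⟨x, Submodule.mem_span_singleton_self x⟩

lemma descKey_compat {X : Ban1} (c : Cocone (finSubDiagram X)) (s : FinSub X)
    (x : X.carrier) (hx : x ∈ s.1) : descKey c x = (c.ι.app s).1 ⟨x, hx⟩ := by
  classical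
  letI := s.2
  have ht : FiniteDimensional ℝ (s.1 ⊔ Submodule.span ℝ {x} : Submodule ℝ X.carrier) :=
    Submodule.finiteDimensional_sup _ _
  set t : FinSub X := ⟨s.1 ⊔ Submodule.span ℝ {x}, ht⟩ with ht'
  have h1 : (FinSub.single X x) ≤ t :=
    (le_sup_right : Submodule.span ℝ {x} ≤ s.1 ⊔ Submodule.span ℝ {x})
  have h2 : s ≤ t := (le_sup_left : s.1 ≤ s.1 ⊔ Submodule.span ℝ {x})
  have n1 := c.ι.naturality (homOfLE h1)
  have n2 := c.ι.naturality (homOfLE h2)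
  simp only [Functor.const_obj_map, Category.comp_id] at n1 n2
  have e1 := congrFun (congrArg DFunLike.coe (congrArg Subtype.val n1))
    ⟨x, Submodule.mem_span_singleton_self x⟩
  have e2 := congrFun (congrArg DFunLike.coe (congrArg Subtype.val n2)) ⟨x, hx⟩
  exact e1.symm.trans e2

lemma descKey_norm {X : Ban1} (c : Cocone (finSubDiagram X)) (x : X.carrier) :
    ‖descKey c x‖ ≤ ‖x‖ := by
  have h := (c.ι.app (FinSub.single X x)).2
  calc ‖descKey c x‖ ≤ ‖(c.ι.app (FinSub.single X x)).1‖ *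
        ‖(⟨x, Submodule.mem_span_singleton_self x⟩ : Submodule.span ℝ {x})‖ :=
        (c.ι.app (FinSub.single X x)).1.le_opNorm _
    _ ≤ 1 * ‖x‖ := by
        apply mul_le_mul h le_rfl (norm_nonneg _) zero_le_one
    _ = ‖x‖ := one_mul _

noncomputable def descHom {X : Ban1} (c : Cocone (finSubDiagram X)) :
    X.carrier →L[ℝ] c.pt.carrier := by
  refine LinearMap.mkContinuous
    { toFun := descKey c
      map_add' := fun x y => ?_
      map_smul' := fun r x => ?_ } 1 (fun x => by rw [one_mul]; exact descKey_norm c x)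
  · classical
    have ht : FiniteDimensional ℝ
        (Submodule.span ℝ {x} ⊔ Submodule.span ℝ {y} : Submodule ℝ X.carrier) :=
      Submodule.finiteDimensional_sup _ _
    set t : FinSub X := ⟨Submodule.span ℝ {x} ⊔ Submodule.span ℝ {y}, ht⟩
    have hx : x ∈ t.1 := Submodule.mem_sup_left (Submodule.mem_span_singleton_self x)
    have hy : y ∈ t.1 := Submodule.mem_sup_right (Submodule.mem_span_singleton_self y)
    rw [descKey_compat c t x hx, descKey_compat c t y hy,
      descKey_compat c t (x + y) (t.1.add_mem hx hy)]
    have : (⟨x + y, t.1.add_mem hx hy⟩ : t.1) = ⟨x, hx⟩ + ⟨y, hy⟩ := rfl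
    rw [this]
    exact map_add (c.ι.app t).1 _ _
  · have hx : x ∈ (FinSub.single X x).1 := Submodule.mem_span_singleton_self x
    show descKey c (r • x) = (RingHom.id ℝ) r • descKey c x
    rw [RingHom.id_apply]
    rw [descKey_compat c (FinSub.single X x) (r • x) ((FinSub.single X x).1.smul_mem r hx)]
    show _ = r • descKey c x
    rw [descKey_compat c (FinSub.single X x) x hx]
    have : (⟨r • x, (FinSub.single X x).1.smul_mem r hx⟩ : (FinSub.single X x).1)
        = r • ⟨x, hx⟩ := rfl
    rw [this]
    exact map_smul (c.ι.app (FinSub.single X x)).1 r _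

/-- Every Banach space is the inductive limit of its finite-dimensional subspaces in `Ban₁`. -/
theorem stmt0 (X : Ban1) : Nonempty (IsColimit (finSubCocone X)) := by
  refine ⟨{
    desc := fun c => ⟨descHom c, LinearMap.mkContinuous_norm_le _ zero_le_one _⟩
    fac := fun c s => Subtype.ext ?_
    uniq := fun c m hm => Subtype.ext ?_ }⟩
  · ext x
    exact (descKey_compat c s x.1 x.2).symm ▸ (descKey_compat c s x.1 x.2).symm
  · ext x
    have hs := congrArg Subtype.val (hm (FinSub.single X x))
    have := congrFun (congrArg DFunLike.coe hs) ⟨x, Submodule.mem_span_singleton_self x⟩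
    exact this.trans rfl
end

section
/- In the category of Banach spaces and contractive operators, every Banach space X is the colimit of the forgetful functor from the comma category (ℓ₁-finite ↓ X), whose objects are pairs (ℓ₁ⁿ, φ) with φ: ℓ₁ⁿ → X a contractive operator; i.e., X = lim→ ℓ₁ⁿ over this comma category. -/
open CategoryTheory Limits

/-- `ℓ₁ⁿ`: the space `ℝⁿ` with the `ℓ₁` norm. -/
abbrev L1n (n : ℕ) : Type := PiLp 1 (fun _ : Fin n => ℝ)

/-- The comma category `(ℓ₁• ↓ X)`: objects are pairs `(ℓ₁ⁿ, φ)` where `φ : ℓ₁ⁿ → X` is a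
contractive operator. -/
structure L1Over (X : Ban1) : Type where
  n : ℕ
  φ : L1n n →L[ℝ] X.carrier
  hφ : ‖φ‖ ≤ 1

instance (X : Ban1) : Category (L1Over X) where
  Hom a b := {α : L1n a.n →L[ℝ] L1n b.n // ‖α‖ ≤ 1 ∧ b.φ.comp α = a.φ}
  id a := ⟨ContinuousLinearMap.id ℝ _, ContinuousLinearMap.norm_id_le, by ext x; rfl⟩
  comp {a b c} f g := ⟨g.1.comp f.1,
    le_trans (ContinuousLinearMap.opNorm_comp_le _ _)
      (mul_le_one₀ g.2.1 (norm_nonneg _) f.2.1),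
    by rw [← ContinuousLinearMap.comp_assoc, g.2.2, f.2.2]⟩
  id_comp f := Subtype.ext (by ext x; rfl)
  comp_id f := Subtype.ext (by ext x; rfl)
  assoc f g h := Subtype.ext (by ext x; rfl)

/-- The forgetful functor `(ℓ₁• ↓ X) ⥤ Ban₁` sending `(ℓ₁ⁿ, φ)` to `ℓ₁ⁿ`. -/
noncomputable def l1OverForget (X : Ban1) : L1Over X ⥤ Ban1 where
  obj a := { carrier := L1n a.n }
  map f := ⟨f.1, f.2.1⟩
  map_id a := Subtype.ext (ContinuousLinearMap.ext fun _ => rfl)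
  map_comp f g := Subtype.ext (ContinuousLinearMap.ext fun _ => rfl)

/-- The cocone over the forgetful functor of the comma category whose point is `X` itself,
with structure maps the `φ`'s. -/
noncomputable def l1OverCocone (X : Ban1) : Cocone (l1OverForget X) where
  pt := X
  ι :=
    { app := fun a => ⟨a.φ, a.hφ⟩
      naturality := fun a b f => Subtype.ext
        (by ext x; exact DFunLike.congr_fun f.2.2 x) }

noncomputable section ProofAux

namespace L1Colim

def L1n.e {n : ℕ} (i : Fin n) : L1n n := (WithLp.equiv 1 _).symm (Pi.single i 1)

@[simp] lemma L1n.e_apply {n : ℕ} (i j : Fin n) :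
    L1n.e i j = if j = i then (1:ℝ) else 0 := by
  rw [L1n.e, WithLp.equiv_symm_apply, PiLp.toLp_apply, Pi.single_apply]

lemma L1n.norm_eq {n : ℕ} (x : L1n n) : ‖x‖ = ∑ i, |x i| := by
  rw [PiLp.norm_eq_sum (by norm_num)]; simp

lemma L1n.norm_e {n : ℕ} (i : Fin n) : ‖L1n.e i‖ = 1 := by
  rw [L1n.norm_eq, Finset.sum_eq_single i]
  · simp
  · intro j _ hj; simp [hj]
  · simp

lemma L1n.decomp {n : ℕ} (x : L1n n) : x = ∑ i, x i • L1n.e i := by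
  ext j
  rw [show (∑ i : Fin n, x i • L1n.e i) j
      = ∑ i : Fin n, (x i • L1n.e i) j from by rw [WithLp.ofLp_sum, Finset.sum_apply]]
  simp

variable {Y : Type*} [NormedAddCommGroup Y] [NormedSpace ℝ Y]

/-- The contractive map `ℓ₁ⁿ → Y` sending the basis vectors to given vectors of norm ≤ 1. -/
def mkL1 {n : ℕ} (v : Fin n → Y) (hv : ∀ i, ‖v i‖ ≤ 1) : L1n n →L[ℝ] Y :=
  LinearMap.mkContinuous
    { toFun := fun u => ∑ i, u i • v i
      map_add' := fun u w => by simp [add_smul, Finset.sum_add_distrib]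
      map_smul' := fun r u => by simp [Finset.smul_sum, smul_smul] }
    1
    (fun u => by
      calc ‖∑ i, u i • v i‖ ≤ ∑ i, ‖u i • v i‖ := norm_sum_le _ _
        _ ≤ ∑ i, |u i| := by
            refine Finset.sum_le_sum fun i _ => ?_
            rw [norm_smul]
            simpa using mul_le_of_le_one_right (abs_nonneg _) (hv i)
        _ = 1 * ‖u‖ := by rw [L1n.norm_eq]; ring)

@[simp] lemma mkL1_apply {n : ℕ} (v : Fin n → Y) (hv : ∀ i, ‖v i‖ ≤ 1) (u : L1n n) :
    mkL1 v hv u = ∑ i, u i • v i := rfl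

lemma mkL1_norm_le {n : ℕ} (v : Fin n → Y) (hv : ∀ i, ‖v i‖ ≤ 1) : ‖mkL1 v hv‖ ≤ 1 :=
  LinearMap.mkContinuous_norm_le _ zero_le_one _

lemma mkL1_e {n : ℕ} (v : Fin n → Y) (hv : ∀ i, ‖v i‖ ≤ 1) (i : Fin n) :
    mkL1 v hv (L1n.e i) = v i := by
  rw [mkL1_apply, Finset.sum_eq_single i]
  · simp
  · intro j _ hj; simp [hj]
  · simp

lemma apply_eq_sum {n : ℕ} (f : L1n n →L[ℝ] Y) (u : L1n n) :
    f u = ∑ i, u i • f (L1n.e i) := by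
  conv_lhs => rw [L1n.decomp u]
  simp

lemma norm_image_e_le {n : ℕ} (f : L1n n →L[ℝ] Y) (hf : ‖f‖ ≤ 1) (i : Fin n) :
    ‖f (L1n.e i)‖ ≤ 1 := by
  calc ‖f (L1n.e i)‖ ≤ ‖f‖ * ‖L1n.e i‖ := f.le_opNorm _
    _ ≤ 1 := by rw [L1n.norm_e]; simpa using hf

variable {X : Ban1}

/-- If `φ u = 0` then the cocone leg kills `u`. -/
lemma ker_zero (s : Cocone (l1OverForget X)) (a : L1Over X) (u : L1n a.n)
    (hu : a.φ u = 0) : (s.ι.app a).1 u = 0 := by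
  by_cases h0 : u = 0
  · rw [h0]; exact map_zero (s.ι.app a).1
  have hc : (0:ℝ) < ‖u‖ := norm_pos_iff.2 h0
  -- basis images for the two maps ℓ₁^{n+1} → ℓ₁ⁿ
  set vγ : Fin (a.n + 1) → L1n a.n := Fin.snoc (fun j => L1n.e j) 0 with hvγ
  set vβ : Fin (a.n + 1) → L1n a.n := Fin.snoc (fun j => L1n.e j) (‖u‖⁻¹ • u) with hvβ
  have hγb : ∀ i, ‖vγ i‖ ≤ 1 := by
    intro i
    refine Fin.lastCases ?_ ?_ i
    · simp [hvγ]
    · intro j; simp [hvγ, L1n.norm_e]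
  have hβb : ∀ i, ‖vβ i‖ ≤ 1 := by
    intro i
    refine Fin.lastCases ?_ ?_ i
    · rw [hvβ]
      simp only [Fin.snoc_last]
      rw [norm_smul, norm_inv, Real.norm_eq_abs, abs_of_pos hc]
      exact le_of_eq (inv_mul_cancel₀ (ne_of_gt hc))
    · intro j; simp [hvβ, L1n.norm_e]
  set γ := mkL1 vγ hγb with hγdef
  set β := mkL1 vβ hβb with hβdef
  set b : L1Over X :=
    { n := a.n + 1
      φ := a.φ.comp γ
      hφ := le_trans (ContinuousLinearMap.opNorm_comp_le _ _)
        (mul_le_one₀ a.hφ (norm_nonneg _) (mkL1_norm_le _ _)) } with hbdef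
  have key : ∀ z : L1n (a.n + 1), a.φ (β z) = a.φ (γ z) := by
    intro z
    rw [hγdef, hβdef, mkL1_apply, mkL1_apply, map_sum, map_sum]
    refine Finset.sum_congr rfl fun i _ => ?_
    refine Fin.lastCases ?_ ?_ i
    · simp [hvγ, hvβ, map_smul, hu]
    · intro j; simp [hvγ, hvβ]
  have w1 := congrArg Subtype.val (s.w (show b ⟶ a from ⟨γ, mkL1_norm_le _ _, rfl⟩))
  have w2 := congrArg Subtype.val (s.w (show b ⟶ a from
    ⟨β, mkL1_norm_le _ _, ContinuousLinearMap.ext fun z => key z⟩))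
  set z₀ : L1n (a.n + 1) := (WithLp.equiv 1 _).symm (Fin.snoc 0 ‖u‖) with hz₀
  have hz₀app : ∀ j : Fin a.n, z₀ j.castSucc = 0 := fun j => by
    rw [hz₀, WithLp.equiv_symm_apply, PiLp.toLp_apply, Fin.snoc_castSucc]; rfl
  have hz₀last : z₀ (Fin.last a.n) = ‖u‖ := by
    rw [hz₀, WithLp.equiv_symm_apply, PiLp.toLp_apply, Fin.snoc_last]
  have hγz₀ : γ z₀ = 0 := by
    rw [hγdef, mkL1_apply, Fin.sum_univ_castSucc]
    simp [hz₀app, hz₀last, hvγ]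
  have hβz₀ : β z₀ = u := by
    rw [hβdef, mkL1_apply, Fin.sum_univ_castSucc]
    simp [hz₀app, hz₀last, hvβ, smul_smul, mul_inv_cancel₀ (ne_of_gt hc)]
  have e1 := DFunLike.congr_fun w1 z₀
  have e2 := DFunLike.congr_fun w2 z₀
  -- e1 : ι_a (γ z₀) = ι_b z₀, e2 : ι_a (β z₀) = ι_b z₀ (up to composition shape)
  have e1' : (s.ι.app a).1 (γ z₀) = (s.ι.app b).1 z₀ := by exact e1
  have e2' : (s.ι.app a).1 (β z₀) = (s.ι.app b).1 z₀ := by exact e2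
  rw [hβz₀] at e2'
  rw [hγz₀] at e1'
  rw [e2', ← e1']
  exact map_zero (s.ι.app a).1

lemma max_pos {x : X.carrier} : (0:ℝ) < max ‖x‖ 1 := lt_of_lt_of_le one_pos (le_max_right _ _)

/-- Well-definedness: cocone legs agree on elements with the same image in `X`. -/
lemma eq_of_eq (s : Cocone (l1OverForget X)) (a b : L1Over X) (v : L1n a.n) (w : L1n b.n)
    (h : a.φ v = b.φ w) : (s.ι.app a).1 v = (s.ι.app b).1 w := by
  set vc : Fin (a.n + b.n) → X.carrier :=
    Fin.addCases (fun i => a.φ (L1n.e i)) (fun j => b.φ (L1n.e j)) with hvc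
  have hvcb : ∀ i, ‖vc i‖ ≤ 1 := by
    intro i
    refine Fin.addCases (fun i => ?_) (fun j => ?_) i
    · simp only [hvc, Fin.addCases_left]; exact norm_image_e_le a.φ a.hφ i
    · simp only [hvc, Fin.addCases_right]; exact norm_image_e_le b.φ b.hφ j
  set c : L1Over X := ⟨a.n + b.n, mkL1 vc hvcb, mkL1_norm_le _ _⟩ with hcdef
  set inl : L1n a.n →L[ℝ] L1n (a.n + b.n) :=
    mkL1 (fun i => L1n.e (Fin.castAdd b.n i)) (fun i => le_of_eq (L1n.norm_e _)) with hinldef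
  set inr : L1n b.n →L[ℝ] L1n (a.n + b.n) :=
    mkL1 (fun j => L1n.e (Fin.natAdd a.n j)) (fun j => le_of_eq (L1n.norm_e _)) with hinrdef
  have hl : c.φ.comp inl = a.φ := by
    have step : ∀ k : Fin a.n, c.φ (L1n.e (Fin.castAdd b.n k)) = a.φ (L1n.e k) := fun k => by
      show (mkL1 vc hvcb) _ = _
      rw [mkL1_e, hvc]
      simp only [Fin.addCases_left]
    apply ContinuousLinearMap.ext
    intro u
    have expand : inl u = ∑ i, u i • L1n.e (Fin.castAdd b.n i) := mkL1_apply _ _ u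
    rw [ContinuousLinearMap.comp_apply, expand, map_sum]
    simp only [map_smul, step]
    exact (apply_eq_sum a.φ u).symm
  have hr : c.φ.comp inr = b.φ := by
    have step : ∀ k : Fin b.n, c.φ (L1n.e (Fin.natAdd a.n k)) = b.φ (L1n.e k) := fun k => by
      show (mkL1 vc hvcb) _ = _
      rw [mkL1_e, hvc]
      simp only [Fin.addCases_right]
    apply ContinuousLinearMap.ext
    intro u
    have expand : inr u = ∑ i, u i • L1n.e (Fin.natAdd a.n i) := mkL1_apply _ _ u
    rw [ContinuousLinearMap.comp_apply, expand, map_sum]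
    simp only [map_smul, step]
    exact (apply_eq_sum b.φ u).symm
  have h0 : c.φ (inl v - inr w) = 0 := by
    rw [map_sub]
    have hv' : c.φ (inl v) = a.φ v := DFunLike.congr_fun hl v
    have hw' : c.φ (inr w) = b.φ w := DFunLike.congr_fun hr w
    rw [hv', hw', h, sub_self]
  have hker := ker_zero s c _ h0
  rw [show (s.ι.app c).1 (inl v - inr w) = (s.ι.app c).1 (inl v) - (s.ι.app c).1 (inr w) from
    map_sub (s.ι.app c).1 _ _] at hker
  have hker' : (s.ι.app c).1 (inl v) = (s.ι.app c).1 (inr w) := sub_eq_zero.mp hker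
  have wA := DFunLike.congr_fun (congrArg Subtype.val
    (s.w (show a ⟶ c from ⟨inl, mkL1_norm_le _ _, hl⟩))) v
  have wB := DFunLike.congr_fun (congrArg Subtype.val
    (s.w (show b ⟶ c from ⟨inr, mkL1_norm_le _ _, hr⟩))) w
  have wA' : (s.ι.app c).1 (inl v) = (s.ι.app a).1 v := by exact wA
  have wB' : (s.ι.app c).1 (inr w) = (s.ι.app b).1 w := by exact wB
  rw [← wA', ← wB', hker']

lemma scaled_norm_le (x : X.carrier) : ‖(max ‖x‖ 1)⁻¹ • x‖ ≤ 1 := by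
  rw [norm_smul, norm_inv, Real.norm_eq_abs, abs_of_pos max_pos]
  calc (max ‖x‖ 1)⁻¹ * ‖x‖ ≤ (max ‖x‖ 1)⁻¹ * max ‖x‖ 1 :=
        mul_le_mul_of_nonneg_left (le_max_left _ _) (inv_nonneg.2 (le_of_lt max_pos))
    _ = 1 := inv_mul_cancel₀ (ne_of_gt max_pos)

lemma scaled_norm_le' {x : X.carrier} (hx : (0:ℝ) < ‖x‖) : ‖‖x‖⁻¹ • x‖ ≤ 1 := by
  rw [norm_smul, norm_inv, Real.norm_eq_abs, abs_of_pos hx]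
  exact le_of_eq (inv_mul_cancel₀ (ne_of_gt hx))

/-- A canonical representative object for `x : X`. -/
def obj1 (X : Ban1) (x : X.carrier) : L1Over X where
  n := 1
  φ := mkL1 (fun _ => (max ‖x‖ 1)⁻¹ • x) (fun _ => scaled_norm_le x)
  hφ := mkL1_norm_le _ _

def vec1 (X : Ban1) (x : X.carrier) : L1n 1 :=
  (WithLp.equiv 1 _).symm (fun _ => max ‖x‖ 1)

lemma obj1_spec (X : Ban1) (x : X.carrier) : (obj1 X x).φ (vec1 X x) = x := by
  show mkL1 (fun _ => (max ‖x‖ 1)⁻¹ • x) (fun _ => scaled_norm_le x) (vec1 X x) = x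
  rw [mkL1_apply, Fin.sum_univ_one]
  show (max ‖x‖ 1) • ((max ‖x‖ 1)⁻¹ • x) = x
  rw [smul_smul, mul_inv_cancel₀ (ne_of_gt max_pos), one_smul]

def descFun (s : Cocone (l1OverForget X)) (x : X.carrier) : s.pt.carrier :=
  (s.ι.app (obj1 X x)).1 (vec1 X x)

lemma descFun_spec (s : Cocone (l1OverForget X)) {x : X.carrier} {a : L1Over X}
    {v : L1n a.n} (hv : a.φ v = x) : descFun s x = (s.ι.app a).1 v :=
  eq_of_eq s (obj1 X x) a (vec1 X x) v (by rw [obj1_spec, hv])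

lemma descFun_add (s : Cocone (l1OverForget X)) (x y : X.carrier) :
    descFun s (x + y) = descFun s x + descFun s y := by
  set vp : Fin 2 → X.carrier := ![(max ‖x‖ 1)⁻¹ • x, (max ‖y‖ 1)⁻¹ • y] with hvp
  have hb : ∀ i, ‖vp i‖ ≤ 1 := by
    intro i
    fin_cases i
    · show ‖(max ‖x‖ 1)⁻¹ • x‖ ≤ 1
      exact scaled_norm_le x
    · show ‖(max ‖y‖ 1)⁻¹ • y‖ ≤ 1
      exact scaled_norm_le y
  set c : L1Over X := ⟨2, mkL1 vp hb, mkL1_norm_le _ _⟩ with hcdef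
  set z1 : L1n 2 := (WithLp.equiv 1 _).symm ![max ‖x‖ 1, 0] with hz1
  set z2 : L1n 2 := (WithLp.equiv 1 _).symm ![0, max ‖y‖ 1] with hz2
  have h1 : c.φ z1 = x := by
    show mkL1 vp hb z1 = x
    rw [mkL1_apply, Fin.sum_univ_two]
    show (max ‖x‖ 1) • vp 0 + (0:ℝ) • vp 1 = x
    rw [zero_smul, add_zero, hvp]
    show (max ‖x‖ 1) • ((max ‖x‖ 1)⁻¹ • x) = x
    rw [smul_smul, mul_inv_cancel₀ (ne_of_gt max_pos), one_smul]
  have h2 : c.φ z2 = y := by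
    show mkL1 vp hb z2 = y
    rw [mkL1_apply, Fin.sum_univ_two]
    show (0:ℝ) • vp 0 + (max ‖y‖ 1) • vp 1 = y
    rw [zero_smul, zero_add, hvp]
    show (max ‖y‖ 1) • ((max ‖y‖ 1)⁻¹ • y) = y
    rw [smul_smul, mul_inv_cancel₀ (ne_of_gt max_pos), one_smul]
  have h12 : c.φ (z1 + z2) = x + y := by rw [map_add, h1, h2]
  rw [descFun_spec s h12, descFun_spec s h1, descFun_spec s h2]
  exact map_add (s.ι.app c).1 z1 z2

lemma descFun_smul (s : Cocone (l1OverForget X)) (r : ℝ) (x : X.carrier) :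
    descFun s (r • x) = r • descFun s x := by
  have h : (obj1 X x).φ (r • vec1 X x) = r • x := by
    exact (map_smul (obj1 X x).φ r (vec1 X x)).trans (congrArg (r • ·) (obj1_spec X x))
  rw [descFun_spec s h]
  exact (map_smul (s.ι.app (obj1 X x)).1 r (vec1 X x)).trans rfl

lemma descFun_norm (s : Cocone (l1OverForget X)) (x : X.carrier) :
    ‖descFun s x‖ ≤ ‖x‖ := by
  by_cases h : x = 0
  · subst h
    have h0 : descFun s ((0:ℝ) • (0:X.carrier)) = (0:ℝ) • descFun s 0 := descFun_smul s 0 0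
    rw [zero_smul, zero_smul] at h0
    rw [h0]
    simp
  · have hx : (0:ℝ) < ‖x‖ := norm_pos_iff.2 h
    set a : L1Over X := ⟨1, mkL1 (fun _ => ‖x‖⁻¹ • x) (fun _ => scaled_norm_le' hx),
      mkL1_norm_le _ _⟩ with hadef
    set v : L1n 1 := (WithLp.equiv 1 _).symm (fun _ => ‖x‖) with hvdef
    have hv : a.φ v = x := by
      show mkL1 (fun _ => ‖x‖⁻¹ • x) (fun _ => scaled_norm_le' hx) v = x
      rw [mkL1_apply, Fin.sum_univ_one]
      show ‖x‖ • (‖x‖⁻¹ • x) = x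
      rw [smul_smul, mul_inv_cancel₀ (ne_of_gt hx), one_smul]
    rw [descFun_spec s hv]
    have hnv : ‖v‖ = ‖x‖ := by
      rw [L1n.norm_eq v, Fin.sum_univ_one]
      show |‖x‖| = ‖x‖
      exact abs_of_pos hx
    calc ‖(s.ι.app a).1 v‖ ≤ ‖(s.ι.app a).1‖ * ‖v‖ := (s.ι.app a).1.le_opNorm v
      _ ≤ 1 * ‖v‖ := mul_le_mul_of_nonneg_right (s.ι.app a).2 (norm_nonneg _)
      _ = ‖x‖ := by rw [one_mul, hnv]

/-- The descent map as a continuous linear map. -/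
def descCLM (s : Cocone (l1OverForget X)) : X.carrier →L[ℝ] s.pt.carrier :=
  LinearMap.mkContinuous
    { toFun := descFun s
      map_add' := descFun_add s
      map_smul' := descFun_smul s }
    1
    (fun x => by rw [one_mul]; exact descFun_norm s x)

lemma descCLM_norm_le (s : Cocone (l1OverForget X)) : ‖descCLM s‖ ≤ 1 :=
  LinearMap.mkContinuous_norm_le _ zero_le_one _

@[simp] lemma descCLM_apply (s : Cocone (l1OverForget X)) (x : X.carrier) :
    descCLM s x = descFun s x := rfl

end L1Colim

end ProofAux

/-- Every Banach space `X` is the inductive limit `X = lim→ ℓ₁ⁿ` over the comma category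
`(ℓ₁• ↓ X)` in `Ban₁`. -/
theorem stmt1 (X : Ban1) : Nonempty (IsColimit (l1OverCocone X)) := by
  refine ⟨{ desc := fun s => ⟨L1Colim.descCLM s, L1Colim.descCLM_norm_le s⟩,
            fac := fun s a => ?_, uniq := fun s m hm => ?_ }⟩
  · apply Subtype.ext
    apply ContinuousLinearMap.ext
    intro v
    show L1Colim.descFun s (a.φ v) = (s.ι.app a).1 v
    exact L1Colim.descFun_spec s rfl
  · apply Subtype.ext
    apply ContinuousLinearMap.ext
    intro x
    have h := DFunLike.congr_fun (congrArg Subtype.val (hm (L1Colim.obj1 X x)))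
      (L1Colim.vec1 X x)
    have h' : m.1 ((L1Colim.obj1 X x).φ (L1Colim.vec1 X x)) = L1Colim.descFun s x := by
      exact h
    rw [L1Colim.obj1_spec X x] at h'
    exact h'
end

section
/- If a family of contractive operators ψ_{(n,φ)}: ℓ₁ⁿ → Y is compatible with all morphisms of the comma category (ℓ₁• ↓ X) (i.e. ψ_{(m,φ')}∘α = ψ_{(n,φ)} whenever φ'∘α = φ), then the map T: X → Y defined by T(x) = ψ_{(n,φ)}(u) whenever φ(u) = x is well-defined, linear, and contractive. -/
lemma L1n.norm_eq {n} (t : L1n n) : ‖t‖ = ∑ i, ‖t i‖ := by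
  rw [PiLp.norm_eq_sum (p := 1) (by norm_num)]; simp

noncomputable def mkn {E : Type*} [NormedAddCommGroup E] [NormedSpace ℝ E] {n : ℕ}
    (v : Fin n → E) : L1n n →L[ℝ] E :=
  LinearMap.mkContinuous
    { toFun := fun t => ∑ i, t i • v i
      map_add' := fun a b => by
        simp [PiLp.add_apply, add_smul, Finset.sum_add_distrib]
      map_smul' := fun c a => by
        simp [PiLp.smul_apply, smul_smul, Finset.smul_sum] }
    (∑ i, ‖v i‖) (fun t => by
      calc ‖∑ i, t i • v i‖ ≤ ∑ i, ‖t i • v i‖ := norm_sum_le _ _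
      _ = ∑ i, ‖v i‖ * ‖t i‖ := by simp [norm_smul, mul_comm]
      _ ≤ ∑ i, ‖v i‖ * ‖t‖ := Finset.sum_le_sum (fun i _ => by
          have : ‖t i‖ ≤ ‖t‖ := by
            rw [L1n.norm_eq]
            exact Finset.single_le_sum (fun j _ => norm_nonneg _) (Finset.mem_univ i)
          exact mul_le_mul_of_nonneg_left this (norm_nonneg _))
      _ = (∑ i, ‖v i‖) * ‖t‖ := by rw [Finset.sum_mul])

lemma mkn_apply {E : Type*} [NormedAddCommGroup E] [NormedSpace ℝ E] {n : ℕ}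
    (v : Fin n → E) (t : L1n n) : mkn v t = ∑ i, t i • v i := rfl

lemma mkn_norm_le {E : Type*} [NormedAddCommGroup E] [NormedSpace ℝ E] {n : ℕ}
    {v : Fin n → E} (hv : ∀ i, ‖v i‖ ≤ 1) : ‖mkn v‖ ≤ 1 := by
  refine ContinuousLinearMap.opNorm_le_bound _ zero_le_one (fun t => by
    rw [one_mul, mkn_apply, L1n.norm_eq]
    calc ‖∑ i, t i • v i‖ ≤ ∑ i, ‖t i • v i‖ := norm_sum_le _ _
    _ ≤ ∑ i, ‖t i‖ := Finset.sum_le_sum (fun i _ => by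
        rw [norm_smul]
        exact mul_le_of_le_one_right (norm_nonneg _) (hv i)))

lemma inv_smul_norm_le {E : Type*} [NormedAddCommGroup E] [NormedSpace ℝ E]
    {u : E} {c : ℝ} (hc : 0 < c) (hu : ‖u‖ ≤ c) : ‖c⁻¹ • u‖ ≤ 1 := by
  rw [norm_smul, norm_inv, Real.norm_eq_abs, abs_of_pos hc]
  rw [inv_mul_le_iff₀ hc, mul_one]
  exact hu

lemma mkn_single_norm_le {E : Type*} [NormedAddCommGroup E] [NormedSpace ℝ E]
    {u : E} {c : ℝ} (hc : 0 < c) (hu : ‖u‖ ≤ c) :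
    ‖mkn (fun _ : Fin 1 => c⁻¹ • u)‖ ≤ 1 :=
  mkn_norm_le (fun _ => inv_smul_norm_le hc hu)

noncomputable def sc (c : ℝ) : L1n 1 := (WithLp.equiv 1 _).symm (fun _ => c)

lemma sc_apply (c : ℝ) (i : Fin 1) : sc c i = c := rfl

lemma sc_norm (c : ℝ) : ‖sc c‖ = |c| := by
  rw [L1n.norm_eq]; simp [sc_apply]

lemma sc_smul (a c : ℝ) : a • sc c = sc (a * c) := rfl

lemma mkn_sc {E : Type*} [NormedAddCommGroup E] [NormedSpace ℝ E]
    (w : E) (c : ℝ) : mkn (fun _ : Fin 1 => w) (sc c) = c • w := by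
  rw [mkn_apply, Fin.sum_univ_one, sc_apply]

noncomputable def j2 (a b : ℝ) : L1n 2 := (WithLp.equiv 1 _).symm ![a, b]

lemma j2_add (a b : ℝ) : j2 a b = j2 a 0 + j2 0 b := by
  ext i
  fin_cases i <;> simp [j2]

lemma mkn_j2 {E : Type*} [NormedAddCommGroup E] [NormedSpace ℝ E]
    (v w : E) (a b : ℝ) : mkn ![v, w] (j2 a b) = a • v + b • w := by
  rw [mkn_apply, Fin.sum_univ_two]
  rfl

/-- Given a family of contractive operators `ψ (n, φ) : ℓ₁ⁿ → Y`, indexed by the objects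
`(ℓ₁ⁿ, φ : ℓ₁ⁿ → X)` of the comma category `(ℓ₁• ↓ X)` and compatible with all its morphisms,
the induced map `T : X → Y`, `T (φ u) = ψ (n, φ) u`, is well defined, linear and contractive. -/
theorem stmt2 {X Y : Type} [NormedAddCommGroup X] [NormedSpace ℝ X] [CompleteSpace X]
    [NormedAddCommGroup Y] [NormedSpace ℝ Y] [CompleteSpace Y]
    (ψ : ∀ (n : ℕ) (φ : L1n n →L[ℝ] X), ‖φ‖ ≤ 1 → (L1n n →L[ℝ] Y))
    (hψnorm : ∀ n φ hφ, ‖ψ n φ hφ‖ ≤ 1)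
    (hcompat : ∀ (n m : ℕ) (φ : L1n n →L[ℝ] X) (φ' : L1n m →L[ℝ] X)
      (hφ : ‖φ‖ ≤ 1) (hφ' : ‖φ'‖ ≤ 1) (α : L1n n →L[ℝ] L1n m), ‖α‖ ≤ 1 →
        φ'.comp α = φ → (ψ m φ' hφ').comp α = ψ n φ hφ) :
    (∀ (n m : ℕ) (φ : L1n n →L[ℝ] X) (φ' : L1n m →L[ℝ] X)
      (hφ : ‖φ‖ ≤ 1) (hφ' : ‖φ'‖ ≤ 1) (u : L1n n) (u' : L1n m),
        φ u = φ' u' → ψ n φ hφ u = ψ m φ' hφ' u') ∧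
    ∃ T : X →L[ℝ] Y, ‖T‖ ≤ 1 ∧
      ∀ (n : ℕ) (φ : L1n n →L[ℝ] X) (hφ : ‖φ‖ ≤ 1) (u : L1n n),
        T (φ u) = ψ n φ hφ u := by
  -- change of representative lemma
  have key : ∀ (n : ℕ) (φ : L1n n →L[ℝ] X) (hφ : ‖φ‖ ≤ 1) (u : L1n n) (c : ℝ)
      (hc : 0 < c) (hu : ‖u‖ ≤ c)
      (h1 : ‖mkn (fun _ : Fin 1 => c⁻¹ • φ u)‖ ≤ 1),
      ψ n φ hφ u = ψ 1 (mkn (fun _ : Fin 1 => c⁻¹ • φ u)) h1 (sc c) := by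
    intro n φ hφ u c hc hu h1
    set α : L1n 1 →L[ℝ] L1n n := mkn (fun _ : Fin 1 => c⁻¹ • u) with hαdef
    have hα : ‖α‖ ≤ 1 := mkn_single_norm_le hc hu
    have hcomm : φ.comp α = mkn (fun _ : Fin 1 => c⁻¹ • φ u) := by
      ext t
      simp [hαdef, ContinuousLinearMap.comp_apply, mkn_apply, Fin.sum_univ_one, map_smul]
    have h := hcompat 1 n (mkn (fun _ : Fin 1 => c⁻¹ • φ u)) φ h1 hφ α hα hcomm
    have hαs : α (sc c) = u := by
      rw [hαdef, mkn_sc, smul_smul, mul_inv_cancel₀ hc.ne', one_smul]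
    calc ψ n φ hφ u = (ψ n φ hφ) (α (sc c)) := by rw [hαs]
      _ = ((ψ n φ hφ).comp α) (sc c) := rfl
      _ = ψ 1 (mkn (fun _ : Fin 1 => c⁻¹ • φ u)) h1 (sc c) := by rw [h]
  -- congruence helper
  have hcongr : ∀ (a b : X) (ha : ‖mkn (fun _ : Fin 1 => a)‖ ≤ 1)
      (hb : ‖mkn (fun _ : Fin 1 => b)‖ ≤ 1), a = b →
      ψ 1 (mkn (fun _ : Fin 1 => a)) ha = ψ 1 (mkn (fun _ : Fin 1 => b)) hb := by
    intro a b ha hb h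
    subst h
    rfl
  -- well-definedness
  have wd : ∀ (n m : ℕ) (φ : L1n n →L[ℝ] X) (φ' : L1n m →L[ℝ] X)
      (hφ : ‖φ‖ ≤ 1) (hφ' : ‖φ'‖ ≤ 1) (u : L1n n) (u' : L1n m),
      φ u = φ' u' → ψ n φ hφ u = ψ m φ' hφ' u' := by
    intro n m φ φ' hφ hφ' u u' heq
    set c := max (max ‖u‖ ‖u'‖) 1 with hcdef
    have hc : 0 < c := lt_of_lt_of_le one_pos (le_max_right _ _)
    have hu : ‖u‖ ≤ c := le_trans (le_max_left _ _) (le_max_left _ _)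
    have hu' : ‖u'‖ ≤ c := le_trans (le_max_right _ _) (le_max_left _ _)
    have hφu : ‖φ u‖ ≤ c := by
      calc ‖φ u‖ ≤ ‖φ‖ * ‖u‖ := φ.le_opNorm u
      _ ≤ 1 * c := mul_le_mul hφ hu (norm_nonneg _) zero_le_one
      _ = c := one_mul c
    have hφu' : ‖φ' u'‖ ≤ c := by
      calc ‖φ' u'‖ ≤ ‖φ'‖ * ‖u'‖ := φ'.le_opNorm u'
      _ ≤ 1 * c := mul_le_mul hφ' hu' (norm_nonneg _) zero_le_one
      _ = c := one_mul c
    rw [key n φ hφ u c hc hu (mkn_single_norm_le hc hφu),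
        key m φ' hφ' u' c hc hu' (mkn_single_norm_le hc hφu')]
    exact DFunLike.congr_fun (hcongr _ _ _ _ (by rw [heq])) (sc c)
  refine ⟨wd, ?_⟩
  -- the function
  have hx1 : ∀ x : X, ‖mkn (fun _ : Fin 1 => (max ‖x‖ 1)⁻¹ • x)‖ ≤ 1 := fun x =>
    mkn_single_norm_le (lt_of_lt_of_le one_pos (le_max_right _ _)) (le_max_left _ _)
  set f : X → Y := fun x =>
    ψ 1 (mkn (fun _ : Fin 1 => (max ‖x‖ 1)⁻¹ • x)) (hx1 x) (sc (max ‖x‖ 1)) with hfdef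
  have hcx : ∀ x : X, (0:ℝ) < max ‖x‖ 1 := fun x => lt_of_lt_of_le one_pos (le_max_right _ _)
  have hrep : ∀ x : X, mkn (fun _ : Fin 1 => (max ‖x‖ 1)⁻¹ • x) (sc (max ‖x‖ 1)) = x := by
    intro x
    rw [mkn_sc, smul_smul, mul_inv_cancel₀ (hcx x).ne', one_smul]
  have keyT : ∀ (n : ℕ) (φ : L1n n →L[ℝ] X) (hφ : ‖φ‖ ≤ 1) (u : L1n n),
      f (φ u) = ψ n φ hφ u := by
    intro n φ hφ u
    exact wd 1 n _ φ (hx1 (φ u)) hφ (sc (max ‖φ u‖ 1)) u (hrep (φ u))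
  -- additivity
  have hadd : ∀ x y : X, f (x + y) = f x + f y := by
    intro x y
    set cx := max ‖x‖ 1 with hcxdef
    set cy := max ‖y‖ 1 with hcydef
    set v : Fin 2 → X := ![cx⁻¹ • x, cy⁻¹ • y] with hvdef
    have hv : ∀ i, ‖v i‖ ≤ 1 := by
      intro i
      fin_cases i
      · exact inv_smul_norm_le (hcx x) (le_max_left _ _)
      · exact inv_smul_norm_le (hcx y) (le_max_left _ _)
    set φ2 := mkn v with hφ2def
    have hφ2 : ‖φ2‖ ≤ 1 := mkn_norm_le hv
    have h1 : φ2 (j2 cx cy) = x + y := by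
      rw [hφ2def, hvdef, mkn_j2, smul_smul, smul_smul,
        mul_inv_cancel₀ (hcx x).ne', mul_inv_cancel₀ (hcx y).ne', one_smul, one_smul]
    have h2 : φ2 (j2 cx 0) = x := by
      rw [hφ2def, hvdef, mkn_j2, smul_smul, mul_inv_cancel₀ (hcx x).ne',
        one_smul, zero_smul, add_zero]
    have h3 : φ2 (j2 0 cy) = y := by
      rw [hφ2def, hvdef, mkn_j2, zero_smul, zero_add, smul_smul,
        mul_inv_cancel₀ (hcx y).ne', one_smul]
    calc f (x + y) = f (φ2 (j2 cx cy)) := by rw [h1]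
      _ = ψ 2 φ2 hφ2 (j2 cx cy) := keyT 2 φ2 hφ2 _
      _ = ψ 2 φ2 hφ2 (j2 cx 0) + ψ 2 φ2 hφ2 (j2 0 cy) := by rw [j2_add cx cy, map_add]
      _ = f (φ2 (j2 cx 0)) + f (φ2 (j2 0 cy)) := by rw [keyT, keyT]
      _ = f x + f y := by rw [h2, h3]
  -- scalar multiplication
  have hsmul : ∀ (a : ℝ) (x : X), f (a • x) = a • f x := by
    intro a x
    set cx := max ‖x‖ 1 with hcxdef
    set φx := mkn (fun _ : Fin 1 => cx⁻¹ • x) with hφxdef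
    have h1 : φx (sc (a * cx)) = a • x := by
      rw [hφxdef, mkn_sc, smul_smul, mul_assoc, mul_inv_cancel₀ (hcx x).ne', mul_one]
    calc f (a • x) = f (φx (sc (a * cx))) := by rw [h1]
      _ = ψ 1 φx (hx1 x) (sc (a * cx)) := keyT 1 φx (hx1 x) _
      _ = a • ψ 1 φx (hx1 x) (sc cx) := by rw [← sc_smul, map_smul]
      _ = a • f (φx (sc cx)) := by rw [keyT 1 φx (hx1 x)]
      _ = a • f x := by rw [hφxdef, hrep x]
  -- norm bound
  have hnorm : ∀ x : X, ‖f x‖ ≤ ‖x‖ := by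
    intro x
    rcases eq_or_ne x 0 with rfl | hx
    · have h0 : f 0 = 0 := by
        have := hsmul 0 0
        simpa using this
      simp [h0]
    · have hpos : 0 < ‖x‖ := norm_pos_iff.mpr hx
      have h' : ‖mkn (fun _ : Fin 1 => ‖x‖⁻¹ • x)‖ ≤ 1 := mkn_single_norm_le hpos le_rfl
      have hfx : f x = ψ 1 (mkn (fun _ : Fin 1 => ‖x‖⁻¹ • x)) h' (sc ‖x‖) := by
        refine wd 1 1 _ _ (hx1 x) h' (sc (max ‖x‖ 1)) (sc ‖x‖) ?_
        rw [hrep x, mkn_sc, smul_smul, mul_inv_cancel₀ hpos.ne', one_smul]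
      rw [hfx]
      calc ‖ψ 1 _ h' (sc ‖x‖)‖ ≤ ‖ψ 1 _ h'‖ * ‖sc ‖x‖‖ := ContinuousLinearMap.le_opNorm _ _
        _ ≤ 1 * ‖x‖ := by
            refine mul_le_mul (hψnorm _ _ _) ?_ (norm_nonneg _) zero_le_one
            rw [sc_norm, abs_of_nonneg (norm_nonneg x)]
        _ = ‖x‖ := one_mul _
  refine ⟨LinearMap.mkContinuous
      { toFun := f
        map_add' := hadd
        map_smul' := hsmul } 1 (fun x => by rw [one_mul]; exact hnorm x),
    LinearMap.mkContinuous_norm_le _ zero_le_one _,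
    fun n φ hφ u => keyT n φ hφ u⟩
end

section
/- The right Kan extension of the identity functor 1: Ban₁ → Ban₁ along the forgetful functor □: Ban₁ → QBan₁ is the Banach envelope functor co: QBan₁ → Ban₁. -/
open CategoryTheory Limits

/-- The category of (real) quasi-Banach spaces and contractive linear maps: a quasi-Banach space
is a vector space with a quasi-norm (with modulus of concavity `C`) which is complete for the
induced notion of Cauchy sequence. -/
structure QBan1 : Type 1 where
  carrier : Type
  [acg : AddCommGroup carrier]
  [mod : Module ℝ carrier]
  qnorm : carrier → ℝ
  C : ℝ
  one_le_C : 1 ≤ C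
  qnorm_zero_iff : ∀ x, qnorm x = 0 ↔ x = 0
  qnorm_smul : ∀ (a : ℝ) x, qnorm (a • x) = |a| * qnorm x
  qnorm_triangle : ∀ x y, qnorm (x + y) ≤ C * (qnorm x + qnorm y)
  complete : ∀ u : ℕ → carrier,
    (∀ ε > 0, ∃ N, ∀ m n, N ≤ m → N ≤ n → qnorm (u m - u n) < ε) →
    ∃ x, ∀ ε > 0, ∃ N, ∀ n, N ≤ n → qnorm (u n - x) < ε

attribute [instance] QBan1.acg QBan1.mod

instance : Category QBan1 where
  Hom Q R := {f : Q.carrier →ₗ[ℝ] R.carrier // ∀ x, R.qnorm (f x) ≤ Q.qnorm x}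
  id Q := ⟨LinearMap.id, fun x => le_refl _⟩
  comp f g := ⟨g.1.comp f.1, fun x => le_trans (g.2 _) (f.2 x)⟩
  id_comp f := Subtype.ext (LinearMap.ext fun _ => rfl)
  comp_id f := Subtype.ext (LinearMap.ext fun _ => rfl)
  assoc f g h := Subtype.ext (LinearMap.ext fun _ => rfl)

open CategoryTheory in
/-- The forgetful functor `□ : Ban₁ ⥤ QBan₁`. -/
noncomputable def box : Ban1 ⥤ QBan1 where
  obj X :=
    { carrier := X.carrier
      qnorm := fun x => ‖x‖
      C := 1
      one_le_C := le_refl 1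
      qnorm_zero_iff := fun x => norm_eq_zero
      qnorm_smul := fun a x => by show ‖a • x‖ = |a| * ‖x‖; rw [norm_smul, Real.norm_eq_abs]
      qnorm_triangle := fun x y => by show ‖x + y‖ ≤ 1 * (‖x‖ + ‖y‖); rw [one_mul]; exact norm_add_le x y
      complete := by
        intro u hu
        have hc : CauchySeq u := by
          rw [Metric.cauchySeq_iff]
          intro ε hε
          obtain ⟨N, hN⟩ := hu ε hε
          exact ⟨N, fun m hm n hn => by rw [dist_eq_norm]; exact hN m n hm hn⟩
        obtain ⟨x, hx⟩ := cauchySeq_tendsto_of_complete hc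
        refine ⟨x, fun ε hε => ?_⟩
        rw [Metric.tendsto_atTop] at hx
        obtain ⟨N, hN⟩ := hx ε hε
        exact ⟨N, fun n hn => by show ‖u n - x‖ < ε; rw [← dist_eq_norm]; exact hN n hn⟩ }
  map {X Y} f := ⟨f.1.toLinearMap, fun x =>
    le_trans (f.1.le_opNorm x) (mul_le_of_le_one_left (norm_nonneg x) f.2)⟩
  map_id X := Subtype.ext (LinearMap.ext fun _ => rfl)
  map_comp f g := Subtype.ext (LinearMap.ext fun _ => rfl)

open CategoryTheory in
/-- The right Kan extension of the identity functor `1 : Ban₁ ⥤ Ban₁` along the forgetful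
functor `□ : Ban₁ ⥤ QBan₁` is the Banach envelope functor `co` (characterized here by its
universal property via the canonical natural maps `η.app Q : Q → co Q`). -/
theorem stmt7 (co : QBan1 ⥤ Ban1) (η : 𝟭 QBan1 ⟶ co ⋙ box)
    (huniv : ∀ (Q : QBan1) (Y : Ban1) (f : Q ⟶ box.obj Y),
      ∃! g : co.obj Q ⟶ Y, η.app Q ≫ box.map g = f) :
    ∃ ε : box ⋙ co ⟶ 𝟭 Ban1, co.IsRightKanExtension ε := by
  choose g hg huq using huniv
  replace huq : ∀ (Q : QBan1) (Y : Ban1) (f : Q ⟶ box.obj Y) (y : co.obj Q ⟶ Y),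
      η.app Q ≫ box.map y = f → y = g Q Y f := huq
  -- the counit
  set εapp : ∀ Y : Ban1, co.obj (box.obj Y) ⟶ Y := fun Y => g (box.obj Y) Y (𝟙 _) with hε
  have htriA : ∀ Y : Ban1, η.app (box.obj Y) ≫ box.map (εapp Y) = 𝟙 (box.obj Y) :=
    fun Y => hg _ _ _
  have hηnat : ∀ {Q R : QBan1} (f : Q ⟶ R),
      η.app Q ≫ box.map (co.map f) = f ≫ η.app R := by
    intro Q R f
    simpa using (η.naturality f).symm
  have htriB : ∀ Q : QBan1, co.map (η.app Q) ≫ εapp (co.obj Q) = 𝟙 (co.obj Q) := by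
    intro Q
    have h0 : η.app Q ≫ box.map (co.map (η.app Q)) = η.app Q ≫ η.app (box.obj (co.obj Q)) := by
      simpa using hηnat (η.app Q)
    have h1 : η.app Q ≫ box.map (co.map (η.app Q) ≫ εapp (co.obj Q)) = η.app Q := by
      rw [box.map_comp, ← Category.assoc, h0, Category.assoc, htriA (co.obj Q)]
      simp
    have h2 : η.app Q ≫ box.map (𝟙 (co.obj Q)) = η.app Q := by simp
    rw [huq _ _ _ _ h1, huq _ _ _ _ h2]
  refine ⟨{ app := εapp, naturality := ?_ }, ?_⟩
  · intro X Y φ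
    have h0 : η.app (box.obj X) ≫ box.map (co.map (box.map φ)) =
        box.map φ ≫ η.app (box.obj Y) := by simpa using hηnat (box.map φ)
    have h1 : η.app (box.obj X) ≫ box.map (co.map (box.map φ) ≫ εapp Y) = box.map φ := by
      rw [box.map_comp, ← Category.assoc, h0, Category.assoc, htriA Y]
      simp
    have h2 : η.app (box.obj X) ≫ box.map (εapp X ≫ φ) = box.map φ := by
      rw [box.map_comp, ← Category.assoc, htriA X]
      simp
    show co.map (box.map φ) ≫ εapp Y = εapp X ≫ φ
    rw [huq _ _ _ _ h1, huq _ _ _ _ h2]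
  · constructor
    constructor
    refine IsTerminal.ofUniqueHom (fun G' => ?_) (fun G' m => ?_)
    · refine CostructuredArrow.homMk ?_ ?_
      · exact
        { app := fun Q => G'.left.map (η.app Q) ≫ G'.hom.app (co.obj Q)
          naturality := by
            intro Q R f
            have hb := G'.hom.naturality (co.map f)
            dsimp at hb
            erw [← Category.assoc, ← G'.left.map_comp, ← hηnat f, G'.left.map_comp,
              Category.assoc, hb, ← Category.assoc] }
      · ext X
        have hb := G'.hom.naturality (εapp X)
        dsimp at hb ⊢
        erw [Category.assoc, ← hb, ← Category.assoc, ← G'.left.map_comp, htriA X,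
          G'.left.map_id, Category.id_comp]
    · apply CostructuredArrow.hom_ext
      ext Q
      have hw := CostructuredArrow.w m
      have hwQ : m.left.app (box.obj (co.obj Q)) ≫ εapp (co.obj Q)
          = G'.hom.app (co.obj Q) := congrArg (fun t => t.app (co.obj Q)) hw
      have hmn : G'.left.map (η.app Q) ≫ m.left.app (box.obj (co.obj Q))
          = m.left.app Q ≫ co.map (η.app Q) := by
        exact m.left.naturality (η.app Q)
      show m.left.app Q = G'.left.map (η.app Q) ≫ G'.hom.app (co.obj Q)
      erw [← hwQ, ← Category.assoc, hmn, Category.assoc, htriB Q]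
      exact (Category.comp_id _).symm
end

section
/- The left Kan extension of the identity functor 1: Ban₁ → Ban₁ along the forgetful functor □: Ban₁ → QBan₁ is also the Banach envelope functor co; in particular, for every quasi-Banach space Q, the colimit of the forgetful functor on the comma category (Ban₁ ↓ Q) (pairs (X, τ) with X Banach and τ: X → Q contractive) equals co(Q). -/
open CategoryTheory Limits

namespace Stmt8Aux

open CategoryTheory Limits

lemma qnorm_nonneg (Q : QBan1) (x : Q.carrier) : 0 ≤ Q.qnorm x := by
  have h0 : Q.qnorm (x + (-x)) = 0 := by
    rw [add_neg_cancel]; exact (Q.qnorm_zero_iff 0).mpr rfl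
  have ht := Q.qnorm_triangle x (-x)
  have hneg : Q.qnorm (-x) = Q.qnorm x := by
    have h := Q.qnorm_smul (-1) x
    simpa using h
  rw [h0, hneg] at ht
  by_contra h
  push_neg at h
  nlinarith [Q.one_le_C]

lemma qC_pos (Q : QBan1) : (0:ℝ) < Q.C := lt_of_lt_of_le one_pos Q.one_le_C

noncomputable def R1 : Ban1 := { carrier := ℝ }

noncomputable def B2 : Ban1 := { carrier := ℝ × ℝ }

/-- The map `t ↦ t • p` as a morphism `□ℝ ⟶ Q`, for `p` in the unit ball of `Q`. -/
noncomputable def tau (Q : QBan1) (p : Q.carrier) (hp : Q.qnorm p ≤ 1) : box.obj R1 ⟶ Q :=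
  ⟨LinearMap.toSpanSingleton ℝ Q.carrier p, fun (t : ℝ) => by
    show Q.qnorm (LinearMap.toSpanSingleton ℝ Q.carrier p t) ≤ ‖t‖
    rw [LinearMap.toSpanSingleton_apply, Q.qnorm_smul, Real.norm_eq_abs]
    exact mul_le_of_le_one_right (abs_nonneg t) hp⟩

lemma tau_apply (Q : QBan1) (p : Q.carrier) (hp : Q.qnorm p ≤ 1) (t : ℝ) :
    (tau Q p hp).1 t = t • p := LinearMap.toSpanSingleton_apply ℝ Q.carrier p t

/-- Turn a morphism between `box` objects into a morphism of Banach spaces. -/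
noncomputable def boxHom {X Y : Ban1} (f : box.obj X ⟶ box.obj Y) : X ⟶ Y :=
  ⟨LinearMap.mkContinuous f.1 1 (fun (x : X.carrier) => by
      rw [one_mul]; exact f.2 x),
   LinearMap.mkContinuous_norm_le _ zero_le_one _⟩

lemma box_map_boxHom {X Y : Ban1} (f : box.obj X ⟶ box.obj Y) :
    box.map (boxHom f) = f := Subtype.ext rfl

/-- The unit `1 ⟶ □ ⋙ co`. -/
noncomputable def uNat (co : QBan1 ⥤ Ban1) (η : 𝟭 QBan1 ⟶ co ⋙ box) :
    𝟭 Ban1 ⟶ box ⋙ co where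
  app X := boxHom (η.app (box.obj X))
  naturality X Y f := by
    refine Subtype.ext (ContinuousLinearMap.coe_injective ?_)
    exact congrArg Subtype.val (η.naturality (box.map f))


section ColimitConstruction

variable (Q : QBan1) (s : Cocone (CostructuredArrow.proj box Q ⋙ 𝟭 Ban1))

/-- Evaluation of the cocone `s` at a unit-ball element of `Q`. -/
noncomputable def ee (p : Q.carrier) : s.pt.carrier :=
  if hp : Q.qnorm p ≤ 1 then (s.ι.app (CostructuredArrow.mk (tau Q p hp))).1 (1:ℝ) else 0

lemma ee_eq (p : Q.carrier) (hp : Q.qnorm p ≤ 1) :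
    ee Q s p = (s.ι.app (CostructuredArrow.mk (tau Q p hp))).1 (1:ℝ) := dif_pos hp

lemma ee_norm (p : Q.carrier) (hp : Q.qnorm p ≤ 1) : ‖ee Q s p‖ ≤ 1 := by
  rw [ee_eq Q s p hp]
  have h := (s.ι.app (CostructuredArrow.mk (tau Q p hp))).1.le_opNorm (1:ℝ)
  have h2 := (s.ι.app (CostructuredArrow.mk (tau Q p hp))).2
  calc ‖(s.ι.app (CostructuredArrow.mk (tau Q p hp))).1 (1:ℝ)‖
      ≤ ‖(s.ι.app (CostructuredArrow.mk (tau Q p hp))).1‖ * ‖(1:ℝ)‖ := h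
    _ ≤ 1 := by rw [norm_one, mul_one]; exact h2

lemma ee_smul (p : Q.carrier) (hp : Q.qnorm p ≤ 1) (c : ℝ) (hc : |c| ≤ 1) :
    ee Q s (c • p) = c • ee Q s p := by
  have hcp : Q.qnorm (c • p) ≤ 1 := by
    rw [Q.qnorm_smul]
    exact mul_le_one₀ hc (qnorm_nonneg Q p) hp
  rw [ee_eq Q s p hp, ee_eq Q s (c • p) hcp]
  have hφn : ‖c • ContinuousLinearMap.id ℝ ℝ‖ ≤ 1 := by
    refine ContinuousLinearMap.opNorm_le_bound _ zero_le_one (fun (t : ℝ) => ?_)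
    rw [one_mul, ContinuousLinearMap.smul_apply, ContinuousLinearMap.id_apply, norm_smul]
    exact mul_le_of_le_one_left (norm_nonneg t) (by rwa [Real.norm_eq_abs])
  set φ : R1 ⟶ R1 := ⟨c • ContinuousLinearMap.id ℝ ℝ, hφn⟩ with hφ
  have w : box.map φ ≫ tau Q p hp = tau Q (c • p) hcp := by
    refine Subtype.ext (LinearMap.ext fun (t : ℝ) => ?_)
    show (c * t) • p = (tau Q (c • p) hcp).1 t
    rw [tau_apply, smul_smul, mul_comm]
  have hw := s.w (CostructuredArrow.homMk
    (f := CostructuredArrow.mk (tau Q (c • p) hcp))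
    (f' := CostructuredArrow.mk (tau Q p hp)) φ w)
  have h : (s.ι.app (CostructuredArrow.mk (tau Q p hp))).1 (c * 1) =
      (s.ι.app (CostructuredArrow.mk (tau Q (c • p) hcp))).1 (1:ℝ) :=
    congrArg (fun f => f.1 (1:ℝ)) hw
  rw [← h]
  exact map_smul (s.ι.app (CostructuredArrow.mk (tau Q p hp))).1 c (1:ℝ)

/-- The two-dimensional comparison morphism `□(ℝ×ℝ) ⟶ Q`. -/
noncomputable def sigma2 (q1 q2 : Q.carrier) (h1 : Q.qnorm q1 ≤ 1) (h2 : Q.qnorm q2 ≤ 1) :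
    box.obj B2 ⟶ Q :=
  ⟨(2 * Q.C)⁻¹ • (((LinearMap.toSpanSingleton ℝ Q.carrier q1).comp (LinearMap.fst ℝ ℝ ℝ)) +
      ((LinearMap.toSpanSingleton ℝ Q.carrier q2).comp (LinearMap.snd ℝ ℝ ℝ))), by
    intro (v : ℝ × ℝ)
    have hC := qC_pos Q
    show Q.qnorm ((2 * Q.C)⁻¹ • (v.1 • q1 + v.2 • q2)) ≤ ‖v‖
    rw [Q.qnorm_smul, abs_of_pos (by positivity)]
    have hv1 : |v.1| ≤ ‖v‖ := by
      rw [Prod.norm_def]; exact le_trans (le_of_eq (Real.norm_eq_abs v.1).symm) (le_max_left _ _)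
    have hv2 : |v.2| ≤ ‖v‖ := by
      rw [Prod.norm_def]; exact le_trans (le_of_eq (Real.norm_eq_abs v.2).symm) (le_max_right _ _)
    have ht := Q.qnorm_triangle (v.1 • q1) (v.2 • q2)
    rw [Q.qnorm_smul, Q.qnorm_smul] at ht
    have hb1 : |v.1| * Q.qnorm q1 ≤ ‖v‖ * 1 :=
      mul_le_mul hv1 h1 (qnorm_nonneg Q q1) (norm_nonneg v)
    have hb2 : |v.2| * Q.qnorm q2 ≤ ‖v‖ * 1 :=
      mul_le_mul hv2 h2 (qnorm_nonneg Q q2) (norm_nonneg v)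
    have hb : Q.qnorm (v.1 • q1 + v.2 • q2) ≤ 2 * Q.C * ‖v‖ := by nlinarith
    calc (2 * Q.C)⁻¹ * Q.qnorm (v.1 • q1 + v.2 • q2)
        ≤ (2 * Q.C)⁻¹ * (2 * Q.C * ‖v‖) := by
          exact mul_le_mul_of_nonneg_left hb (by positivity)
      _ = ‖v‖ := by field_simp⟩

lemma sigma2_apply (q1 q2 : Q.carrier) (h1 : Q.qnorm q1 ≤ 1) (h2 : Q.qnorm q2 ≤ 1)
    (v : ℝ × ℝ) : (sigma2 Q q1 q2 h1 h2).1 v = (2 * Q.C)⁻¹ • (v.1 • q1 + v.2 • q2) := by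
  show (2 * Q.C)⁻¹ • ((LinearMap.toSpanSingleton ℝ Q.carrier q1 v.1) +
      (LinearMap.toSpanSingleton ℝ Q.carrier q2 v.2)) = _
  rw [LinearMap.toSpanSingleton_apply, LinearMap.toSpanSingleton_apply]

/-- The injection `t ↦ (t, 0)` (resp. `(0,t)`, resp. `(t,t)`) as a `Ban1` morphism. -/
noncomputable def jmap (a b : ℝ) (hab : |a| ≤ 1) (hbb : |b| ≤ 1) : R1 ⟶ B2 :=
  ⟨LinearMap.mkContinuous
    ((LinearMap.prod (a • LinearMap.id) (b • LinearMap.id)) : ℝ →ₗ[ℝ] ℝ × ℝ) 1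
    (fun (t : ℝ) => by
      rw [one_mul]
      show ‖(a • t, b • t)‖ ≤ ‖t‖
      rw [Prod.norm_def]
      refine max_le ?_ ?_
      · rw [norm_smul]; exact mul_le_of_le_one_left (norm_nonneg t) (by rwa [Real.norm_eq_abs])
      · rw [norm_smul]; exact mul_le_of_le_one_left (norm_nonneg t) (by rwa [Real.norm_eq_abs])),
   LinearMap.mkContinuous_norm_le _ zero_le_one _⟩

lemma ee_add (q1 q2 : Q.carrier) (h1 : Q.qnorm q1 ≤ 1) (h2 : Q.qnorm q2 ≤ 1) :
    ee Q s ((2 * Q.C)⁻¹ • (q1 + q2)) =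
      ee Q s ((2 * Q.C)⁻¹ • q1) + ee Q s ((2 * Q.C)⁻¹ • q2) := by
  have hC := qC_pos Q
  have h2C : (0:ℝ) < 2 * Q.C := by positivity
  have hinv : |(2 * Q.C)⁻¹| ≤ 1 := by
    rw [abs_of_pos (by positivity)]
    exact inv_le_one_of_one_le₀ (by nlinarith [Q.one_le_C])
  have hm1 : Q.qnorm ((2 * Q.C)⁻¹ • q1) ≤ 1 := by
    rw [Q.qnorm_smul]; exact mul_le_one₀ hinv (qnorm_nonneg Q q1) h1
  have hm2 : Q.qnorm ((2 * Q.C)⁻¹ • q2) ≤ 1 := by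
    rw [Q.qnorm_smul]; exact mul_le_one₀ hinv (qnorm_nonneg Q q2) h2
  have hm : Q.qnorm ((2 * Q.C)⁻¹ • (q1 + q2)) ≤ 1 := by
    rw [Q.qnorm_smul, abs_of_pos (by positivity)]
    have ht := Q.qnorm_triangle q1 q2
    have : Q.qnorm (q1 + q2) ≤ 2 * Q.C := by nlinarith
    calc (2 * Q.C)⁻¹ * Q.qnorm (q1 + q2) ≤ (2 * Q.C)⁻¹ * (2 * Q.C) :=
          mul_le_mul_of_nonneg_left this (by positivity)
      _ = 1 := by field_simp
  set σ := sigma2 Q q1 q2 h1 h2 with hσ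
  -- the three structural morphisms
  have w1 : box.map (jmap 1 0 (by norm_num) (by norm_num)) ≫ σ = tau Q _ hm1 := by
    refine Subtype.ext (LinearMap.ext fun (t : ℝ) => ?_)
    show σ.1 ((1:ℝ) • t, (0:ℝ) • t) = (tau Q _ hm1).1 t
    rw [tau_apply, sigma2_apply]
    show (2 * Q.C)⁻¹ • (((1:ℝ) • t) • q1 + ((0:ℝ) • t) • q2) = t • ((2 * Q.C)⁻¹ • q1)
    rw [one_smul ℝ t, zero_smul ℝ t, zero_smul ℝ q2, add_zero, smul_comm t]
  have w2 : box.map (jmap 0 1 (by norm_num) (by norm_num)) ≫ σ = tau Q _ hm2 := by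
    refine Subtype.ext (LinearMap.ext fun (t : ℝ) => ?_)
    show σ.1 ((0:ℝ) • t, (1:ℝ) • t) = (tau Q _ hm2).1 t
    rw [tau_apply, sigma2_apply]
    show (2 * Q.C)⁻¹ • (((0:ℝ) • t) • q1 + ((1:ℝ) • t) • q2) = t • ((2 * Q.C)⁻¹ • q2)
    rw [one_smul ℝ t, zero_smul ℝ t, zero_smul ℝ q1, zero_add, smul_comm t]
  have wd : box.map (jmap 1 1 (by norm_num) (by norm_num)) ≫ σ = tau Q _ hm := by
    refine Subtype.ext (LinearMap.ext fun (t : ℝ) => ?_)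
    show σ.1 ((1:ℝ) • t, (1:ℝ) • t) = (tau Q _ hm).1 t
    rw [tau_apply, sigma2_apply]
    show (2 * Q.C)⁻¹ • (((1:ℝ) • t) • q1 + ((1:ℝ) • t) • q2) =
      t • ((2 * Q.C)⁻¹ • (q1 + q2))
    rw [one_smul ℝ t, smul_comm t ((2 * Q.C)⁻¹) (q1 + q2), smul_add t q1 q2]
  have e1 : (s.ι.app (CostructuredArrow.mk σ)).1
      ((((1:ℝ) • (1:ℝ), (0:ℝ) • (1:ℝ))) : ℝ × ℝ) = ee Q s ((2 * Q.C)⁻¹ • q1) := by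
    rw [ee_eq Q s _ hm1]
    have hw := s.w (CostructuredArrow.homMk
      (f := CostructuredArrow.mk (tau Q _ hm1))
      (f' := CostructuredArrow.mk σ) (jmap 1 0 (by norm_num) (by norm_num)) w1)
    exact congrArg (fun f => f.1 (1:ℝ)) hw
  have e2 : (s.ι.app (CostructuredArrow.mk σ)).1
      ((((0:ℝ) • (1:ℝ), (1:ℝ) • (1:ℝ))) : ℝ × ℝ) = ee Q s ((2 * Q.C)⁻¹ • q2) := by
    rw [ee_eq Q s _ hm2]
    have hw := s.w (CostructuredArrow.homMk
      (f := CostructuredArrow.mk (tau Q _ hm2))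
      (f' := CostructuredArrow.mk σ) (jmap 0 1 (by norm_num) (by norm_num)) w2)
    exact congrArg (fun f => f.1 (1:ℝ)) hw
  have ed : (s.ι.app (CostructuredArrow.mk σ)).1
      ((((1:ℝ) • (1:ℝ), (1:ℝ) • (1:ℝ))) : ℝ × ℝ) = ee Q s ((2 * Q.C)⁻¹ • (q1 + q2)) := by
    rw [ee_eq Q s _ hm]
    have hw := s.w (CostructuredArrow.homMk
      (f := CostructuredArrow.mk (tau Q _ hm))
      (f' := CostructuredArrow.mk σ) (jmap 1 1 (by norm_num) (by norm_num)) wd)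
    exact congrArg (fun f => f.1 (1:ℝ)) hw
  have hpair : ((((1:ℝ) • (1:ℝ), (1:ℝ) • (1:ℝ))) : ℝ × ℝ) =
      ((((1:ℝ) • (1:ℝ), (0:ℝ) • (1:ℝ))) : ℝ × ℝ) + ((((0:ℝ) • (1:ℝ), (1:ℝ) • (1:ℝ))) : ℝ × ℝ) := by
    norm_num
  calc ee Q s ((2 * Q.C)⁻¹ • (q1 + q2))
      = (s.ι.app (CostructuredArrow.mk σ)).1
        ((((1:ℝ) • (1:ℝ), (1:ℝ) • (1:ℝ))) : ℝ × ℝ) := ed.symm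
    _ = (s.ι.app (CostructuredArrow.mk σ)).1
        (((((1:ℝ) • (1:ℝ), (0:ℝ) • (1:ℝ))) : ℝ × ℝ) +
          ((((0:ℝ) • (1:ℝ), (1:ℝ) • (1:ℝ))) : ℝ × ℝ)) := by rw [hpair]
    _ = (s.ι.app (CostructuredArrow.mk σ)).1 ((((1:ℝ) • (1:ℝ), (0:ℝ) • (1:ℝ))) : ℝ × ℝ) +
        (s.ι.app (CostructuredArrow.mk σ)).1 ((((0:ℝ) • (1:ℝ), (1:ℝ) • (1:ℝ))) : ℝ × ℝ) :=
          map_add ((s.ι.app (CostructuredArrow.mk σ)).1) _ _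
    _ = _ := by rw [e1, e2]

end ColimitConstruction

section FFsection

variable (Q : QBan1) (s : Cocone (CostructuredArrow.proj box Q ⋙ 𝟭 Ban1))

noncomputable def nn (q : Q.carrier) : ℝ := max (Q.qnorm q) 1

lemma nn_pos (q : Q.carrier) : 0 < nn Q q := lt_of_lt_of_le one_pos (le_max_right _ _)

lemma qnorm_le_nn (q : Q.carrier) : Q.qnorm q ≤ nn Q q := le_max_left _ _

lemma qnorm_inv_smul_le_one (q : Q.carrier) (r : ℝ) (hr : 0 < r) (hq : Q.qnorm q ≤ r) :
    Q.qnorm (r⁻¹ • q) ≤ 1 := by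
  rw [Q.qnorm_smul, abs_of_pos (by positivity)]
  calc r⁻¹ * Q.qnorm q ≤ r⁻¹ * r := mul_le_mul_of_nonneg_left hq (by positivity)
    _ = 1 := inv_mul_cancel₀ (ne_of_gt hr)

/-- The extension of `ee` to all of `Q` by homogeneity. -/
noncomputable def FF (q : Q.carrier) : s.pt.carrier :=
  nn Q q • ee Q s ((nn Q q)⁻¹ • q)

lemma ee_scale (q : Q.carrier) (r r' : ℝ) (hr : 0 < r) (hrr : r ≤ r')
    (hq : Q.qnorm q ≤ r) : r' • ee Q s (r'⁻¹ • q) = r • ee Q s (r⁻¹ • q) := by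
  have hr' : 0 < r' := lt_of_lt_of_le hr hrr
  have hp : Q.qnorm (r⁻¹ • q) ≤ 1 := qnorm_inv_smul_le_one Q q r hr hq
  have hc : |r / r'| ≤ 1 := by
    rw [abs_of_pos (by positivity)]
    exact div_le_one_of_le₀ hrr (le_of_lt hr')
  have h := ee_smul Q s (r⁻¹ • q) hp (r / r') hc
  rw [smul_smul] at h
  have hcc : r / r' * r⁻¹ = r'⁻¹ := by field_simp <;> ring
  rw [hcc] at h
  rw [h, smul_smul]
  congr 1
  field_simp

lemma FF_eq (q : Q.carrier) (r : ℝ) (hr : 0 < r) (hq : Q.qnorm q ≤ r) :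
    FF Q s q = r • ee Q s (r⁻¹ • q) := by
  have h1 := ee_scale Q s q r (max r (nn Q q)) hr (le_max_left _ _) hq
  have h2 := ee_scale Q s q (nn Q q) (max r (nn Q q)) (nn_pos Q q) (le_max_right _ _)
    (qnorm_le_nn Q q)
  rw [FF, ← h2, h1]

lemma ee_zero : ee Q s (0 : Q.carrier) = 0 := by
  have hp : Q.qnorm (0 : Q.carrier) ≤ 1 := by
    rw [(Q.qnorm_zero_iff 0).mpr rfl]; exact zero_le_one
  have := ee_smul Q s 0 hp 0 (by norm_num)
  rw [zero_smul, zero_smul] at this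
  exact this

lemma FF_smul (q : Q.carrier) (a : ℝ) : FF Q s (a • q) = a • FF Q s q := by
  rcases eq_or_ne a 0 with rfl | ha
  · rw [zero_smul, zero_smul]
    have h0 : Q.qnorm (0 : Q.carrier) ≤ 1 := by
      rw [(Q.qnorm_zero_iff 0).mpr rfl]; exact zero_le_one
    rw [FF_eq Q s 0 1 one_pos h0, smul_zero, ee_zero, smul_zero]
  · have hr := nn_pos Q q
    have har : (0:ℝ) < |a| * nn Q q := by positivity
    have hq1 : Q.qnorm (a • q) ≤ |a| * nn Q q := by
      rw [Q.qnorm_smul]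
      exact mul_le_mul_of_nonneg_left (qnorm_le_nn Q q) (abs_nonneg a)
    rw [FF_eq Q s (a • q) (|a| * nn Q q) har hq1]
    have hps : (|a| * nn Q q)⁻¹ • a • q = (a / |a|) • ((nn Q q)⁻¹ • q) := by
      rw [smul_smul, smul_smul]
      congr 1
      rw [mul_inv]
      field_simp <;> ring
    have hp : Q.qnorm ((nn Q q)⁻¹ • q) ≤ 1 :=
      qnorm_inv_smul_le_one Q q _ hr (qnorm_le_nn Q q)
    have hca : abs (a / abs a) ≤ 1 := by
      rw [abs_div, abs_abs, div_self (by simpa using ha)]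
    rw [hps, ee_smul Q s _ hp _ hca, smul_smul]
    rw [show FF Q s q = nn Q q • ee Q s ((nn Q q)⁻¹ • q) from rfl, smul_smul]
    congr 1
    field_simp <;> ring
  
lemma FF_add (q1 q2 : Q.carrier) : FF Q s (q1 + q2) = FF Q s q1 + FF Q s q2 := by
  have hC := qC_pos Q
  set r : ℝ := max (nn Q q1) (nn Q q2) with hrdef
  have hr : 0 < r := lt_of_lt_of_le (nn_pos Q q1) (le_max_left _ _)
  have hq1 : Q.qnorm q1 ≤ r := le_trans (qnorm_le_nn Q q1) (le_max_left _ _)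
  have hq2 : Q.qnorm q2 ≤ r := le_trans (qnorm_le_nn Q q2) (le_max_right _ _)
  have hp1 : Q.qnorm (r⁻¹ • q1) ≤ 1 := qnorm_inv_smul_le_one Q q1 r hr hq1
  have hp2 : Q.qnorm (r⁻¹ • q2) ≤ 1 := qnorm_inv_smul_le_one Q q2 r hr hq2
  have h2Cr : (0:ℝ) < 2 * Q.C * r := by positivity
  have hsum : Q.qnorm (q1 + q2) ≤ 2 * Q.C * r := by
    have ht := Q.qnorm_triangle q1 q2
    nlinarith
  rw [FF_eq Q s (q1 + q2) (2 * Q.C * r) h2Cr hsum, FF_eq Q s q1 r hr hq1,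
    FF_eq Q s q2 r hr hq2]
  have hkey := ee_add Q s (r⁻¹ • q1) (r⁻¹ • q2) hp1 hp2
  have hrw : (2 * Q.C * r)⁻¹ • (q1 + q2) = (2 * Q.C)⁻¹ • (r⁻¹ • q1 + r⁻¹ • q2) := by
    rw [← smul_add, smul_smul, mul_inv]
  rw [hrw, hkey]
  have hinv : |(2 * Q.C)⁻¹| ≤ 1 := by
    rw [abs_of_pos (by positivity)]
    exact inv_le_one_of_one_le₀ (by nlinarith [Q.one_le_C])
  rw [ee_smul Q s (r⁻¹ • q1) hp1 _ hinv, ee_smul Q s (r⁻¹ • q2) hp2 _ hinv]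
  rw [smul_add, smul_smul, smul_smul]
  have : 2 * Q.C * r * (2 * Q.C)⁻¹ = r := by field_simp <;> ring
  rw [this]

lemma FF_norm (q : Q.carrier) : ‖FF Q s q‖ ≤ Q.qnorm q := by
  refine le_of_forall_pos_le_add (fun ε hε => ?_)
  have hq0 := qnorm_nonneg Q q
  have hr : (0:ℝ) < Q.qnorm q + ε := by linarith
  rw [FF_eq Q s q (Q.qnorm q + ε) hr (by linarith)]
  rw [norm_smul, Real.norm_eq_abs, abs_of_pos hr]
  have h1 : ‖ee Q s ((Q.qnorm q + ε)⁻¹ • q)‖ ≤ 1 :=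
    ee_norm Q s _ (qnorm_inv_smul_le_one Q q _ hr (by linarith))
  nlinarith [norm_nonneg (ee Q s ((Q.qnorm q + ε)⁻¹ • q))]

/-- `FF` packaged as a morphism `Q ⟶ □(s.pt)` in `QBan1`. -/
noncomputable def FFhom : Q ⟶ box.obj s.pt :=
  ⟨{ toFun := FF Q s
     map_add' := FF_add Q s
     map_smul' := fun a q => FF_smul Q s q a }, fun q => FF_norm Q s q⟩

lemma FFhom_apply (q : Q.carrier) : (FFhom Q s).1 q = FF Q s q := rfl

/-- The crucial compatibility: `FF` agrees with the legs of the cocone `s`. -/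
lemma FF_leg (j : CostructuredArrow box Q) (x : j.left.carrier) :
    FF Q s (j.hom.1 x) = (s.ι.app j).1 x := by
  set r : ℝ := ‖x‖ + 1 with hrdef
  have hr : (0:ℝ) < r := by positivity
  have hxr : ‖x‖ ≤ r := by simp [hrdef]
  have hqx : Q.qnorm (j.hom.1 x) ≤ r := le_trans (j.hom.2 x) hxr
  have hp : Q.qnorm (r⁻¹ • j.hom.1 x) ≤ 1 := qnorm_inv_smul_le_one Q _ r hr hqx
  -- the morphism ℝ ⟶ j.left, t ↦ t • (r⁻¹ • x)
  have hψb : ∀ (t : ℝ), ‖(LinearMap.toSpanSingleton ℝ j.left.carrier (r⁻¹ • x)) t‖ ≤ 1 * ‖t‖ := by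
    intro t
    rw [one_mul, LinearMap.toSpanSingleton_apply, norm_smul, norm_smul, Real.norm_eq_abs,
      Real.norm_eq_abs, abs_of_pos (by positivity : (0:ℝ) < r⁻¹)]
    have : r⁻¹ * ‖x‖ ≤ 1 := by
      rw [show (1:ℝ) = r⁻¹ * r by field_simp]
      exact mul_le_mul_of_nonneg_left hxr (by positivity)
    nlinarith [abs_nonneg t]
  set ψ : R1 ⟶ j.left :=
    ⟨LinearMap.mkContinuous (LinearMap.toSpanSingleton ℝ j.left.carrier (r⁻¹ • x)) 1 hψb,
     LinearMap.mkContinuous_norm_le _ zero_le_one _⟩ with hψ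
  have w : box.map ψ ≫ j.hom = tau Q (r⁻¹ • j.hom.1 x) hp := by
    refine Subtype.ext (LinearMap.ext fun (t : ℝ) => ?_)
    show j.hom.1 (t • (r⁻¹ • x)) = (tau Q (r⁻¹ • j.hom.1 x) hp).1 t
    rw [tau_apply]
    exact (map_smul j.hom.1 t (r⁻¹ • x)).trans (congrArg (t • ·) (map_smul j.hom.1 r⁻¹ x))
  have hw := s.w (CostructuredArrow.homMk
    (f := CostructuredArrow.mk (tau Q (r⁻¹ • j.hom.1 x) hp)) (f' := j) ψ w)
  have h1 : (s.ι.app j).1 ((1:ℝ) • (r⁻¹ • x)) =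
      (s.ι.app (CostructuredArrow.mk (tau Q (r⁻¹ • j.hom.1 x) hp))).1 (1:ℝ) :=
    congrArg (fun f => f.1 (1:ℝ)) hw
  rw [FF_eq Q s _ r hr hqx, ee_eq Q s _ hp, ← h1, one_smul]
  exact (congrArg (r • ·) (map_smul (s.ι.app j).1 r⁻¹ x)).trans
    (by rw [smul_smul, mul_inv_cancel₀ (ne_of_gt hr), one_smul]; rfl)

end FFsection

section Assembly

variable (co : QBan1 ⥤ Ban1) (η : 𝟭 QBan1 ⟶ co ⋙ box)
  (huniv : ∀ (Q : QBan1) (Y : Ban1) (f : Q ⟶ box.obj Y),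
      ∃! g : co.obj Q ⟶ Y, η.app Q ≫ box.map g = f)

/-- Naturality of `η` expressed elementwise through `uNat`. -/
lemma eta_nat_elem (Q : QBan1) (j : CostructuredArrow box Q) (x : j.left.carrier) :
    (co.map j.hom).1 (((uNat co η).app j.left).1 x) = (η.app Q).1 (j.hom.1 x) :=
  (LinearMap.congr_fun (congrArg Subtype.val (η.naturality j.hom)) x).symm

lemma fac_aux (Q : QBan1) (s : Cocone (CostructuredArrow.proj box Q ⋙ 𝟭 Ban1))
    (g : co.obj Q ⟶ s.pt) (hg : η.app Q ≫ box.map g = FFhom Q s)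
    (j : CostructuredArrow box Q) :
    ((Functor.LeftExtension.mk co (uNat co η)).coconeAt Q).ι.app j ≫ g = s.ι.app j := by
  refine Subtype.ext (ContinuousLinearMap.ext fun x => ?_)
  show g.1 ((co.map j.hom).1 (((uNat co η).app j.left).1 x)) = (s.ι.app j).1 x
  rw [eta_nat_elem co η Q j x]
  have hg' : g.1 ((η.app Q).1 (j.hom.1 x)) = FF Q s (j.hom.1 x) :=
    LinearMap.congr_fun (congrArg Subtype.val hg) (j.hom.1 x)
  rw [hg', FF_leg Q s j x]

lemma uniq_aux (Q : QBan1) (s : Cocone (CostructuredArrow.proj box Q ⋙ 𝟭 Ban1))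
    (m : co.obj Q ⟶ s.pt)
    (hm : ∀ j, ((Functor.LeftExtension.mk co (uNat co η)).coconeAt Q).ι.app j ≫ m = s.ι.app j) :
    η.app Q ≫ box.map m = FFhom Q s := by
  refine Subtype.ext (LinearMap.ext fun q => ?_)
  show m.1 ((η.app Q).1 q) = FF Q s q
  set r : ℝ := nn Q q with hrdef
  have hr : 0 < r := nn_pos Q q
  have hp : Q.qnorm (r⁻¹ • q) ≤ 1 :=
    qnorm_inv_smul_le_one Q q r hr (qnorm_le_nn Q q)
  have h := hm (CostructuredArrow.mk (tau Q (r⁻¹ • q) hp))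
  have h1 : m.1 ((co.map (tau Q (r⁻¹ • q) hp)).1 (((uNat co η).app R1).1 (1:ℝ))) =
      (s.ι.app (CostructuredArrow.mk (tau Q (r⁻¹ • q) hp))).1 (1:ℝ) :=
    congrArg (fun f => f.1 (1:ℝ)) h
  have h2 : (co.map (tau Q (r⁻¹ • q) hp)).1 (((uNat co η).app R1).1 (1:ℝ)) =
      (η.app Q).1 ((tau Q (r⁻¹ • q) hp).1 (1:ℝ)) :=
    eta_nat_elem co η Q (CostructuredArrow.mk (tau Q (r⁻¹ • q) hp)) (1:ℝ)
  rw [h2] at h1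
  have htau1 : (tau Q (r⁻¹ • q) hp).1 (1:ℝ) = r⁻¹ • q := by
    rw [tau_apply, one_smul]
  rw [htau1] at h1
  have hq : q = r • (r⁻¹ • q) := by
    rw [smul_smul, mul_inv_cancel₀ (ne_of_gt hr), one_smul]
  calc m.1 ((η.app Q).1 q) = m.1 ((η.app Q).1 (r • (r⁻¹ • q))) := by rw [← hq]
    _ = m.1 (r • ((η.app Q).1 (r⁻¹ • q))) := by rw [map_smul]
    _ = r • m.1 ((η.app Q).1 (r⁻¹ • q)) := map_smul _ r _
    _ = r • (s.ι.app (CostructuredArrow.mk (tau Q (r⁻¹ • q) hp))).1 (1:ℝ) := by rw [h1]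
    _ = FF Q s q := by rw [← ee_eq Q s _ hp]; rfl

/-- The canonical cocone on the comma category `(Ban₁ ↓ Q)` is a colimit cocone. -/
noncomputable def isColimitAt (Q : QBan1) :
    (Functor.LeftExtension.mk co (uNat co η)).IsPointwiseLeftKanExtensionAt Q where
  desc s := (huniv Q s.pt (FFhom Q s)).choose
  fac s j := fac_aux co η Q s _ (huniv Q s.pt (FFhom Q s)).choose_spec.1 j
  uniq s m hm := (huniv Q s.pt (FFhom Q s)).choose_spec.2 m (uniq_aux co η Q s m hm)

end Assembly

end Stmt8Aux

open CategoryTheory in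
/-- The left Kan extension of the identity functor `1 : Ban₁ ⥤ Ban₁` along the forgetful
functor `□ : Ban₁ ⥤ QBan₁` is also the Banach envelope functor `co`; moreover it is a
*pointwise* left Kan extension: for every quasi-Banach space `Q`, the canonical cocone exhibits
`co Q` as the colimit of the forgetful functor on the comma category `(Ban₁ ↓ Q)` of pairs
`(X, τ : □X → Q)`. -/
theorem stmt8 (co : QBan1 ⥤ Ban1) (η : 𝟭 QBan1 ⟶ co ⋙ box)
    (huniv : ∀ (Q : QBan1) (Y : Ban1) (f : Q ⟶ box.obj Y),
      ∃! g : co.obj Q ⟶ Y, η.app Q ≫ box.map g = f) :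
    ∃ u : 𝟭 Ban1 ⟶ box ⋙ co, co.IsLeftKanExtension u ∧
      Nonempty ((Functor.LeftExtension.mk co u).IsPointwiseLeftKanExtension) := by
  refine ⟨Stmt8Aux.uNat co η, ?_, ⟨fun Q => Stmt8Aux.isColimitAt co η huniv Q⟩⟩
  exact Functor.LeftExtension.IsPointwiseLeftKanExtension.isLeftKanExtension
    (fun Q => Stmt8Aux.isColimitAt co η huniv Q)
end
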